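/- Let (X, d) be a complete metric space and for each i ∈ ℕ let F_i = {X; f_{1,i}, …, f_{n_i,i}} be a function system whose maps f_{r,i} : X → X are φ_{r,i}-contractions for comparison functions φ_{r,i} with φ_{r,i}(t) < t for t > 0, so that each induced set map F_i(A) = ⋃_{r=1}^{n_i} f_{r,i}(A) is a φ_i-contraction on (H(X), h) with φ_i = max_r φ_{r,i}. Suppose h(F_i(A₁), A₁) is bounded uniformly in i for some A₁ ∈ H(X), and that Σ_{k=1}^∞ φ₁∘φ₂∘⋯∘φ_k(t) < ∞ for every t > 0. Then the backward SFS trajectories Ψ_k(A) = F₁∘F₂∘⋯∘F_k(A) converge in the Hausdorff metric, for every A ∈ H(X), to one and the same set (the attractor), independent of A. -/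

import Mathlib

open Filter Set Topology

/-- Backward composition: `bwdComp g k = g 0 ∘ g 1 ∘ ⋯ ∘ g (k-1)`
(i.e. `g₁ ∘ g₂ ∘ ⋯ ∘ g_k` in 1-based notation). -/
def bwdComp {α : Type*} (g : ℕ → α → α) : ℕ → α → α
  | 0 => id
  | k + 1 => fun a => bwdComp g k (g k a)

/-- **convergence of backward SFS trajectories.** The function systems
`F i (A) = ⋃_{r < n i} f i r '' A` consist of `φ i r`-contractions for comparison
functions `φ i r` with `φ i r t < t` for `t > 0`; `φmax i = max_r φ i r` is the
comparison function of `F i` for the Hausdorff metric. If `h(F i A₁, A₁)` is bounded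
uniformly in `i` for some nonempty compact `A₁` and `∑ₖ φmax₁∘⋯∘φmax_k (t) < ∞` for
every `t > 0`, then the backward SFS trajectories converge in the Hausdorff metric, for
every nonempty compact initial set, to one and the same set. -/
theorem backward_SFS_trajectories_convergence {X : Type*} [MetricSpace X]
    [CompleteSpace X]
    (n : ℕ → ℕ) (hn : ∀ i, 0 < n i)
    (f : (i : ℕ) → Fin (n i) → X → X)
    (φ : (i : ℕ) → Fin (n i) → ℝ → ℝ)
    (hmap : ∀ i r, ∀ t : ℝ, 0 ≤ t → 0 ≤ φ i r t)
    (hmono : ∀ i r, ∀ s t : ℝ, 0 ≤ s → s ≤ t → φ i r s ≤ φ i r t)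
    (hiter : ∀ i r, ∀ t : ℝ, 0 ≤ t → Tendsto (fun p => (φ i r)^[p] t) atTop (nhds 0))
    (hlt : ∀ i r, ∀ t : ℝ, 0 < t → φ i r t < t)
    (hcontr : ∀ i r, ∀ x y : X, dist (f i r x) (f i r y) ≤ φ i r (dist x y))
    (φmax : ℕ → ℝ → ℝ)
    (hφmax : ∀ i t, φmax i t = ⨆ r : Fin (n i), φ i r t)
    (F : ℕ → Set X → Set X)
    (hF : ∀ i A, F i A = ⋃ r : Fin (n i), f i r '' A)
    (A₁ : Set X) (hA₁ne : A₁.Nonempty) (hA₁c : IsCompact A₁)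
    (M : ℝ) (hM : ∀ i, Metric.hausdorffDist (F i A₁) A₁ ≤ M)
    (hsum : ∀ t : ℝ, 0 < t → Summable (fun k => bwdComp φmax (k + 1) t)) :
    ∃ Astar : Set X, Astar.Nonempty ∧ IsCompact Astar ∧
      ∀ A : Set X, A.Nonempty → IsCompact A →
        Tendsto (fun k => Metric.hausdorffDist (bwdComp F k A) Astar)
          atTop (nhds 0) := by
  classical
  haveI : ∀ i, Nonempty (Fin (n i)) := fun i => ⟨⟨0, hn i⟩⟩
  -- basic facts about φmax
  have hbdd : ∀ i t, BddAbove (Set.range fun r : Fin (n i) => φ i r t) :=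
    fun i t => (Set.finite_range _).bddAbove
  have hφle : ∀ i r t, φ i r t ≤ φmax i t := fun i r t => by
    rw [hφmax]; exact le_ciSup (hbdd i t) r
  have hφmax0 : ∀ i t, 0 ≤ t → 0 ≤ φmax i t := fun i t ht =>
    le_trans (hmap i ⟨0, hn i⟩ t ht) (hφle i _ t)
  have hφmaxmono : ∀ i s t, 0 ≤ s → s ≤ t → φmax i s ≤ φmax i t := fun i s t hs hst => by
    rw [hφmax, hφmax]
    exact ciSup_mono (hbdd i t) fun r => hmono i r s t hs hst
  -- facts about bwdComp φmax
  have hb0 : ∀ k t, 0 ≤ t → 0 ≤ bwdComp φmax k t := by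
    intro k
    induction k with
    | zero => intro t ht; exact ht
    | succ k ih => intro t ht; exact ih _ (hφmax0 k t ht)
  have hbmono : ∀ k s t, 0 ≤ s → s ≤ t → bwdComp φmax k s ≤ bwdComp φmax k t := by
    intro k
    induction k with
    | zero => intro s t _ hst; exact hst
    | succ k ih => intro s t hs hst; exact ih _ _ (hφmax0 k s hs) (hφmaxmono k s t hs hst)
  -- maps are 1-Lipschitz hence continuous
  have hlip : ∀ i r, LipschitzWith 1 (f i r) := by
    intro i r
    apply LipschitzWith.of_dist_le_mul
    intro x y
    rw [NNReal.coe_one, one_mul]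
    rcases eq_or_lt_of_le (dist_nonneg : (0:ℝ) ≤ dist x y) with h | h
    · calc dist (f i r x) (f i r y) ≤ φ i r (dist x y) := hcontr i r x y
        _ = φ i r 0 := by rw [← h]
        _ ≤ 0 := by
            by_contra hc
            push_neg at hc
            have := hlt i r (φ i r 0) hc
            have h2 := hmono i r 0 (φ i r 0) le_rfl hc.le
            linarith
        _ ≤ dist x y := dist_nonneg
    · exact le_trans (hcontr i r x y) (hlt i r _ h).le
  -- F preserves nonempty compacts
  have hFne : ∀ i (A : Set X), A.Nonempty → (F i A).Nonempty := by
    intro i A ⟨a, ha⟩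
    exact ⟨f i ⟨0, hn i⟩ a, by rw [hF]; exact Set.mem_iUnion.2 ⟨⟨0, hn i⟩, ⟨a, ha, rfl⟩⟩⟩
  have hFc : ∀ i (A : Set X), IsCompact A → IsCompact (F i A) := by
    intro i A hA
    rw [hF]
    exact isCompact_iUnion fun r => hA.image (hlip i r).continuous
  -- work in the space of nonempty compacts
  set Y := TopologicalSpace.NonemptyCompacts X with hY
  let G : ℕ → Y → Y := fun i K =>
    ⟨⟨F i K.carrier, hFc i _ K.isCompact⟩, hFne i _ K.nonempty⟩
  have hGcar : ∀ i (K : Y), (G i K).carrier = F i K.carrier := fun i K => rfl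
  have hbGcar : ∀ k (K : Y), (bwdComp G k K).carrier = bwdComp F k K.carrier := by
    intro k
    induction k with
    | zero => intro K; rfl
    | succ k ih =>
      intro K
      show (bwdComp G k (G k K)).carrier = bwdComp F k (F k K.carrier)
      rw [ih (G k K)]
  -- contraction property of F on Hausdorff distance
  have hedist : ∀ (A B : Set X), A.Nonempty → B.Nonempty → IsCompact A → IsCompact B →
      EMetric.hausdorffEdist A B ≠ ⊤ := fun A B hAne hBne hAc hBc =>
    Metric.hausdorffEdist_ne_top_of_nonempty_of_bounded hAne hBne hAc.isBounded hBc.isBounded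
  have hGcontr : ∀ i (K L : Y), dist (G i K) (G i L) ≤ φmax i (dist K L) := by
    intro i K L
    rw [Metric.NonemptyCompacts.dist_eq, Metric.NonemptyCompacts.dist_eq]
    have hfin := hedist K.carrier L.carrier K.nonempty L.nonempty K.isCompact L.isCompact
    have key : ∀ (A B : Set X) (hAc : IsCompact A) (hBc : IsCompact B) (hBne : B.Nonempty)
        (hfin : EMetric.hausdorffEdist A B ≠ ⊤),
        ∀ x ∈ F i A, ∃ y ∈ F i B, dist x y ≤ φmax i (Metric.hausdorffDist A B) := by
      intro A B hAc hBc hBne hfin x hx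
      rw [hF] at hx
      obtain ⟨r, a, ha, rfl⟩ := by simpa using hx
      obtain ⟨b, hb, hab⟩ := hBc.exists_infDist_eq_dist hBne a
      have hdab : dist a b ≤ Metric.hausdorffDist A B := by
        rw [← hab]; exact Metric.infDist_le_hausdorffDist_of_mem ha hfin
      refine ⟨f i r b, by rw [hF]; exact Set.mem_iUnion.2 ⟨r, ⟨b, hb, rfl⟩⟩, ?_⟩
      calc dist (f i r a) (f i r b) ≤ φ i r (dist a b) := hcontr i r a b
        _ ≤ φ i r (Metric.hausdorffDist A B) := hmono i r _ _ dist_nonneg hdab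
        _ ≤ φmax i (Metric.hausdorffDist A B) := hφle i r _
    apply Metric.hausdorffDist_le_of_mem_dist
      (hφmax0 i _ Metric.hausdorffDist_nonneg)
    · exact key K.carrier L.carrier K.isCompact L.isCompact L.nonempty hfin
    · intro y hy
      obtain ⟨x, hx, hd⟩ := key L.carrier K.carrier L.isCompact K.isCompact K.nonempty
        (hedist _ _ L.nonempty K.nonempty L.isCompact K.isCompact) y hy
      exact ⟨x, hx, by rw [Metric.hausdorffDist_comm] at hd; exact hd⟩
  -- contraction of the backward compositions
  have hbGcontr : ∀ k (K L : Y), dist (bwdComp G k K) (bwdComp G k L) ≤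
      bwdComp φmax k (dist K L) := by
    intro k
    induction k with
    | zero => intro K L; exact le_rfl
    | succ k ih =>
      intro K L
      calc dist (bwdComp G k (G k K)) (bwdComp G k (G k L))
          ≤ bwdComp φmax k (dist (G k K) (G k L)) := ih _ _
        _ ≤ bwdComp φmax k (φmax k (dist K L)) :=
            hbmono k _ _ dist_nonneg (hGcontr k K L)
  -- the trajectory of A₁ is Cauchy
  let K₁ : Y := ⟨⟨A₁, hA₁c⟩, hA₁ne⟩
  set y : ℕ → Y := fun k => bwdComp G k K₁ with hy
  have hMnn : (0:ℝ) ≤ M := le_trans Metric.hausdorffDist_nonneg (hM 0)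
  set M' : ℝ := max M 1 with hM'
  have hM'pos : (0:ℝ) < M' := lt_of_lt_of_le one_pos (le_max_right _ _)
  have hsumM' : Summable (fun k => bwdComp φmax k M') := by
    refine (summable_nat_add_iff 1).mp ?_
    exact hsum M' hM'pos
  have hdist_step : ∀ k, dist (y k) (y (k + 1)) ≤ bwdComp φmax k M' := by
    intro k
    rw [show y (k+1) = bwdComp G k (G k K₁) from rfl, show y k = bwdComp G k K₁ from rfl]
    calc dist (bwdComp G k K₁) (bwdComp G k (G k K₁))
        ≤ bwdComp φmax k (dist K₁ (G k K₁)) := hbGcontr k _ _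
      _ ≤ bwdComp φmax k M' := by
          apply hbmono k _ _ dist_nonneg
          rw [Metric.NonemptyCompacts.dist_eq]
          calc Metric.hausdorffDist K₁.carrier (G k K₁).carrier
              = Metric.hausdorffDist (F k A₁) A₁ := by
                rw [Metric.hausdorffDist_comm]
            _ ≤ M := hM k
            _ ≤ M' := le_max_left _ _
  have hcauchy : CauchySeq y :=
    cauchySeq_of_dist_le_of_summable _ hdist_step hsumM'
  obtain ⟨Kstar, hKstar⟩ := cauchySeq_tendsto_of_complete hcauchy
  refine ⟨Kstar.carrier, Kstar.nonempty, Kstar.isCompact, ?_⟩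
  intro A hAne hAc
  let K : Y := ⟨⟨A, hAc⟩, hAne⟩
  -- distance bound
  have hdy : Tendsto (fun k => dist (y k) Kstar) atTop (nhds 0) :=
    tendsto_iff_dist_tendsto_zero.mp hKstar
  set t' : ℝ := max (dist K K₁) 1 with ht'
  have ht'pos : (0:ℝ) < t' := lt_of_lt_of_le one_pos (le_max_right _ _)
  have hsumt' : Summable (fun k => bwdComp φmax k t') :=
    (summable_nat_add_iff 1).mp (hsum t' ht'pos)
  have htend : Tendsto (fun k => bwdComp φmax k t') atTop (nhds 0) := hsumt'.tendsto_atTop_zero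
  have hbound : ∀ k, Metric.hausdorffDist (bwdComp F k A) Kstar.carrier ≤
      bwdComp φmax k t' + dist (y k) Kstar := by
    intro k
    have h1 : Metric.hausdorffDist (bwdComp F k A) Kstar.carrier =
        dist (bwdComp G k K) Kstar := by
      rw [Metric.NonemptyCompacts.dist_eq]
      exact congrArg (fun S => Metric.hausdorffDist S Kstar.carrier) (hbGcar k K).symm
    rw [h1]
    calc dist (bwdComp G k K) Kstar
        ≤ dist (bwdComp G k K) (bwdComp G k K₁) + dist (bwdComp G k K₁) Kstar :=
          dist_triangle _ _ _
      _ ≤ bwdComp φmax k t' + dist (y k) Kstar := by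
          apply add_le_add
          · exact le_trans (hbGcontr k K K₁)
              (hbmono k _ _ dist_nonneg (le_max_left _ _))
          · exact le_rfl
  have hzero : Tendsto (fun k => bwdComp φmax k t' + dist (y k) Kstar) atTop (nhds 0) := by
    simpa using htend.add hdy
  refine squeeze_zero (fun k => Metric.hausdorffDist_nonneg) hbound hzero
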